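/- arXiv:1502.00963 — 3 statements merged into one kernel-verified Lean document; each statement's English description precedes it below -/
import Mathlib

section
/- Let F be an α-strongly regular distribution (0 < α < 1) with differentiable hazard rate h(v) = f(v)/(1-F(v)) and monopoly price r (the value where the virtual valuation φ(v) = v - 1/h(v) equals zero). Then the quantile q(r) = 1 - F(r) satisfies q(r) ≥ α^{1/(1-α)}. -/
open MeasureTheory intervalIntegral in
/-- Let `F` be an `α`-strongly regular distribution (`0 < α < 1`) with hazard rate
`h` (positive on `[0,∞)`), virtual valuation `φ v = v - 1/(h v)`, and monopoly
price `r` (where `φ r = 0`).  Then the quantile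
`q r = 1 - F r = exp (-∫_0^r h)` satisfies `q r ≥ α^(1/(1-α))`. -/
theorem monopoly_quantile_strongly_regular
    (α r : ℝ) (h φ : ℝ → ℝ)
    (hα0 : 0 < α) (hα1 : α < 1) (hr : 0 < r)
    (hpos : ∀ v, 0 ≤ v → 0 < h v)
    (hdiff : ∀ v, 0 ≤ v → DifferentiableAt ℝ h v)
    (hφ : ∀ v, φ v = v - 1 / h v)
    (hreg : ∀ x y, 0 ≤ x → x < y → φ y - φ x ≥ α * (y - x))
    (hmonop : φ r = 0)
    (hint : IntervalIntegrable h volume 0 r) :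
    Real.exp (-(∫ u in (0:ℝ)..r, h u)) ≥ α ^ ((1:ℝ) / (1 - α)) := by
  have h1α : 0 < 1 - α := by linarith
  have hden : ∀ v ∈ Set.Icc (0:ℝ) r, 0 < (1-α)*v + α*r := by
    intro v hv
    nlinarith [hv.1, hv.2]
  -- pointwise bound
  have hbound : ∀ v ∈ Set.Icc (0:ℝ) r, h v ≤ ((1-α)*v + α*r)⁻¹ := by
    intro v hv
    have hv0 := hv.1
    have hvpos := hpos v hv0
    have key : (1-α)*v + α*r ≤ (h v)⁻¹ := by
      rcases eq_or_lt_of_le hv.2 with heq | hlt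
      · subst heq
        have h1 := hφ v
        rw [hmonop] at h1
        have : 1 / h v = v := by linarith
        rw [inv_eq_one_div, this]; ring_nf; linarith
      · have h2 := hreg v r hv0 hlt
        rw [hmonop, hφ v] at h2
        have : 1 / h v = (h v)⁻¹ := one_div _
        nlinarith [h2]
    have := inv_anti₀ (hden v hv) key
    rwa [inv_inv] at this
  set g : ℝ → ℝ := fun v => ((1-α)*v + α*r)⁻¹ with hg
  have hgcont : ContinuousOn g (Set.Icc 0 r) := by
    apply ContinuousOn.inv₀
    · exact (continuous_const.mul continuous_id |>.add continuous_const).continuousOn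
    · exact fun v hv => ne_of_gt (hden v hv)
  have hgint : IntervalIntegrable g volume 0 r := by
    apply ContinuousOn.intervalIntegrable
    rwa [Set.uIcc_of_le hr.le]
  have hmono : (∫ u in (0:ℝ)..r, h u) ≤ ∫ u in (0:ℝ)..r, g u :=
    intervalIntegral.integral_mono_on hr.le hint hgint hbound
  -- compute the integral of g
  have hderiv : ∀ x ∈ Set.uIcc (0:ℝ) r,
      HasDerivAt (fun v => (1-α)⁻¹ * Real.log ((1-α)*v + α*r)) (g x) x := by
    intro x hx
    rw [Set.uIcc_of_le hr.le] at hx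
    have hdx := hden x hx
    have hlin : HasDerivAt (fun v : ℝ => (1-α)*v + α*r) (1-α) x := by
      simpa using ((hasDerivAt_id x).const_mul (1-α)).add_const (α*r)
    have hlog := hlin.log (ne_of_gt hdx)
    have := hlog.const_mul ((1-α)⁻¹)
    convert this using 1
    · rfl
    · rfl
    · show ((1-α)*x + α*r)⁻¹ = _
      rw [← mul_div_assoc, inv_mul_cancel₀ (ne_of_gt h1α), one_div]
  have hcomp : (∫ u in (0:ℝ)..r, g u)
      = (1-α)⁻¹ * Real.log ((1-α)*r + α*r) - (1-α)⁻¹ * Real.log ((1-α)*0 + α*r) :=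
    intervalIntegral.integral_eq_sub_of_hasDerivAt hderiv hgint
  have hval : (∫ u in (0:ℝ)..r, g u) = -(Real.log α) / (1-α) := by
    rw [hcomp]
    have h1 : (1-α)*r + α*r = r := by ring
    have h2 : (1-α)*0 + α*r = α*r := by ring
    rw [h1, h2, Real.log_mul (ne_of_gt hα0) (ne_of_gt hr)]
    ring
  rw [ge_iff_le, Real.rpow_def_of_pos hα0, Real.exp_le_exp]
  rw [hval] at hmono
  have : Real.log α * ((1:ℝ)/(1-α)) = -(-(Real.log α)/(1-α)) := by ring
  rw [this]
  linarith
end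

section
/- Let F be an MHR distribution (hazard rate h nondecreasing) with monopoly price r, i.e., φ(r) = r - 1/h(r) = 0. Then q(r) = 1 - F(r) ≥ 1/e. -/
open MeasureTheory intervalIntegral in
/-- Let `F` be an MHR distribution, i.e. its hazard rate `h` is nondecreasing
on `[0,∞)`, and let `r` be its monopoly price, i.e. `r * h r = 1`
(equivalently `φ r = r - 1/(h r) = 0`).  Then the quantile
`q r = 1 - F r = exp (-∫_0^r h)` is at least `1/e`. -/
theorem monopoly_quantile_mhr
    (r : ℝ) (h : ℝ → ℝ)
    (hr : 0 ≤ r)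
    (hpos : ∀ v, 0 ≤ v → 0 < h v)
    (hmono : MonotoneOn h (Set.Ici (0:ℝ)))
    (hint : IntervalIntegrable h volume 0 r)
    (hmonop : r * h r = 1) :
    Real.exp (-(∫ u in (0:ℝ)..r, h u)) ≥ 1 / Real.exp 1 := by
  have hle : (∫ u in (0:ℝ)..r, h u) ≤ 1 := by
    have h1 : (∫ u in (0:ℝ)..r, h u) ≤ ∫ _ in (0:ℝ)..r, h r := by
      apply intervalIntegral.integral_mono_on hr hint (intervalIntegrable_const)
      intro x hx
      exact hmono hx.1 hr hx.2
    simpa [hmonop, mul_comm] using h1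
  rw [ge_iff_le, one_div, ← Real.exp_neg]
  exact Real.exp_le_exp.mpr (by linarith)
end

section
/- Lower bound on the virtual value gap in the truncated construction: fix α ∈ [0,1), δ ∈ (0,1], k ≥ 2. Let φ_B = (1/(1-α))·((k/δ)^{1-α} - 1) and φ_A = α·(1/(1-α))·((2k/δ)^{1-α} - 1) - 1. Then φ_B - φ_A ≥ (1/(1-α))·(k/δ)^{1-α}·(1 - α·2^{1-α}). -/
/-- Lower bound on the virtual value gap in the truncated construction:
for `α ∈ [0,1)`, `δ ∈ (0,1]`, `k ≥ 2`, with
`φ_B = (1/(1-α)) * ((k/δ)^(1-α) - 1)` and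
`φ_A = α * (1/(1-α)) * ((2k/δ)^(1-α) - 1) - 1`, one has
`φ_B - φ_A ≥ (1/(1-α)) * (k/δ)^(1-α) * (1 - α * 2^(1-α))`. -/
theorem virtual_value_gap
    (α δ k : ℝ) (hα0 : 0 ≤ α) (hα1 : α < 1)
    (hδ0 : 0 < δ) (hδ1 : δ ≤ 1) (hk : 2 ≤ k) :
    (1 / (1 - α)) * ((k / δ) ^ (1 - α) - 1)
        - (α * ((1 / (1 - α)) * ((2 * k / δ) ^ (1 - α) - 1)) - 1)
      ≥ (1 / (1 - α)) * (k / δ) ^ (1 - α) * (1 - α * (2:ℝ) ^ (1 - α)) := by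
  have hx : (0:ℝ) ≤ k / δ := by positivity
  have h2 : (2 * k / δ : ℝ) = 2 * (k / δ) := by ring
  have hne : (1 - α) ≠ 0 := by linarith
  rw [h2, Real.mul_rpow (by norm_num) hx]
  have : (1 / (1 - α)) * (1 - α) = 1 := by field_simp
  nlinarith [this]
end
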